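/- For the n-ray sun graph L_n with n ≥ 2, with A = U_2^{top}(L^{-0}) ∪ U_2^{top}(L^{-1}) and B = {c ∈ U_2^{top}(L_n) : c meets both A_0 and A_1}, one has A ∪ B = U_2^{top}(L_n), and A ∩ B is homeomorphic to [0,1]; consequently π_1(U_2^{top}(L_n), c_*) ≅ π_1(A, c_*) for the base configuration c_* = {1, ζ} with ζ = e^{2πi/n}. -/

import Mathlib

open Set CategoryTheory Complex

open scoped Real
open Topology
open scoped Classical
set_option linter.unusedSectionVars false
set_option linter.unusedVariables false
set_option maxHeartbeats 1000000

local notation "Complex.abs" => (norm : ℂ → ℝ)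


noncomputable section

/-- Ordered configuration space: injective `n`-tuples in `X`
    (the complement of the fat diagonal in `X^n`), with the subspace topology. -/
def OrdConf (n : ℕ) (X : Type*) [TopologicalSpace X] : Type _ :=
  {f : Fin n → X // Function.Injective f}

instance (n : ℕ) (X : Type*) [TopologicalSpace X] : TopologicalSpace (OrdConf n X) :=
  instTopologicalSpaceSubtype

/-- The unordered `n`-point configuration space `U_n^{top}(X)`:
    the set of `n`-element subsets of `X`. -/
def UConf (n : ℕ) (X : Type*) [TopologicalSpace X] : Type _ :=
  {s : Set X // s.Finite ∧ s.ncard = n}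

/-- The natural projection `p : X^n - Δ → U_n^{top}(X)`, `(x_1,…,x_n) ↦ {x_1,…,x_n}`. -/
def confProj (n : ℕ) (X : Type*) [TopologicalSpace X] : OrdConf n X → UConf n X :=
  fun f => ⟨Set.range f.1, Set.finite_range _, by
    rw [← Set.image_univ, Set.ncard_image_of_injective _ f.2, Set.ncard_univ,
      Nat.card_eq_fintype_card, Fintype.card_fin]⟩

/-- `U_n^{top}(X)` carries the quotient topology from `p`. -/
instance (n : ℕ) (X : Type*) [TopologicalSpace X] : TopologicalSpace (UConf n X) :=
  TopologicalSpace.coinduced (confProj n X) inferInstance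

/-- The `j`-th radial arm `A_j = {r·e^{2πij/m} : 1 ≤ r ≤ 2}` of the `m`-ray sun graph. -/
def Arm (m j : ℕ) : Set ℂ :=
  {z | ∃ r : ℝ, 1 ≤ r ∧ r ≤ 2 ∧ z = (r : ℂ) * Complex.exp (2 * Real.pi * j / m * Complex.I)}

/-- The `m`-ray sun graph `L_m = S¹ ∪ A_0 ∪ ⋯ ∪ A_{m-1} ⊆ ℂ`. -/
def Lsun (m : ℕ) : Set ℂ :=
  Metric.sphere (0 : ℂ) 1 ∪ ⋃ j ∈ Finset.range m, Arm m j

/-- `L^{-j} = Cl_{Lₙ}(Lₙ − A_j)`, the closure of the sun graph minus the arm `A_j`. -/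
def LminusArm (m j : ℕ) : Set ℂ := closure (Lsun m \ Arm m j)

/-- unit vector of arm j -/
def armDir (m j : ℕ) : ℂ := Complex.exp (2 * Real.pi * j / m * Complex.I)

lemma abs_armDir (m j : ℕ) : Complex.abs (armDir m j) = 1 := by
  have : (2 * Real.pi * j / m * Complex.I) = ((2 * Real.pi * j / m : ℝ) : ℂ) * Complex.I := by
    push_cast; ring
  rw [armDir, this, Complex.norm_exp_ofReal_mul_I]

lemma arm_eq_image (m j : ℕ) : Arm m j = (fun r : ℝ => (r : ℂ) * armDir m j) '' Icc 1 2 := by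
  ext z; simp [Arm, armDir, Icc, eq_comm, and_assoc]

lemma mem_arm_iff {m j : ℕ} {z : ℂ} : z ∈ Arm m j ↔ ∃ r : ℝ, 1 ≤ r ∧ r ≤ 2 ∧ z = (r:ℂ) * armDir m j := Iff.rfl

lemma abs_of_mem_arm {m j : ℕ} {z : ℂ} {r : ℝ} (h : 0 ≤ r) (hz : z = (r:ℂ) * armDir m j) :
    Complex.abs z = r := by
  rw [hz, Complex.norm_mul, abs_armDir, Complex.norm_real, Real.norm_eq_abs, mul_one, _root_.abs_of_nonneg h]

lemma isClosed_arm (m j : ℕ) : IsClosed (Arm m j) := by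
  rw [arm_eq_image]
  exact (isCompact_Icc.image (by fun_prop)).isClosed

lemma armDir_ne (m : ℕ) {i j : ℕ} (hi : i < m) (hj : j < m) (hij : i ≠ j) :
    armDir m i ≠ armDir m j := by
  intro h
  have hm0 : 0 < m := lt_of_le_of_lt (Nat.zero_le i) hi
  have hm : (0:ℝ) < m := by exact_mod_cast hm0
  rw [armDir, armDir, Complex.exp_eq_exp_iff_exists_int] at h
  obtain ⟨k, hk⟩ := h
  have : ((2 * Real.pi * i / m : ℝ) : ℂ) * Complex.I
      = ((2 * Real.pi * j / m + k * (2 * Real.pi) : ℝ) : ℂ) * Complex.I := by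
    push_cast at hk ⊢; rw [hk]; ring
  have h2 : (2 * Real.pi * i / m : ℝ) = 2 * Real.pi * j / m + k * (2 * Real.pi) := by
    have := mul_right_cancel₀ Complex.I_ne_zero this
    exact_mod_cast this
  have hpi := Real.pi_ne_zero
  field_simp at h2
  have h3 : (i : ℝ) = j + k * m := by
    have h2' : 2*Real.pi*(i:ℝ) = 2*Real.pi*((j:ℝ)+k*m) := by rw [h2]; ring
    exact mul_left_cancel₀ (ne_of_gt (by positivity)) h2'
  have h4 : (i : ℤ) = j + k * m := by exact_mod_cast h3
  have h5 : (i:ℤ) < m := by exact_mod_cast hi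
  have h6 : (j:ℤ) < m := by exact_mod_cast hj
  have h7 : (i:ℤ) ≠ j := by exact_mod_cast hij
  have hmz : (0:ℤ) < m := by exact_mod_cast hm0
  rcases lt_trichotomy k 0 with hk | hk | hk
  · have : k * m ≤ -m := by nlinarith
    omega
  · subst hk; simp at h4; omega
  · have : (m:ℤ) ≤ k * m := le_mul_of_one_le_left (le_of_lt hmz) hk
    omega

lemma arm_disjoint (m : ℕ) {i j : ℕ} (hi : i < m) (hj : j < m) (hij : i ≠ j) :
    Arm m i ∩ Arm m j = ∅ := by
  ext z
  simp only [mem_inter_iff, mem_empty_iff_false, iff_false]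
  rintro ⟨hzi, hzj⟩
  obtain ⟨r, hr1, hr2, hre⟩ := mem_arm_iff.mp hzi
  obtain ⟨s, hs1, hs2, hse⟩ := mem_arm_iff.mp hzj
  have habs : r = s := by
    have h1 := abs_of_mem_arm (by linarith : (0:ℝ) ≤ r) hre
    have h2 := abs_of_mem_arm (by linarith : (0:ℝ) ≤ s) hse
    rw [h1] at h2; exact h2
  subst habs
  have h : (r:ℂ) * armDir m i = (r:ℂ) * armDir m j := by rw [← hre, hse]
  have hr0 : (r : ℂ) ≠ 0 := by exact_mod_cast (by linarith : r ≠ 0)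
  exact armDir_ne m hi hj hij (mul_left_cancel₀ hr0 h)

section B
variable {m k : ℕ}
lemma mem_sphere_iff_abs {z : ℂ} : z ∈ Metric.sphere (0:ℂ) 1 ↔ Complex.abs z = 1 := by
  simp [Complex.dist_eq]

lemma armDir_mem_arm (m j : ℕ) : armDir m j ∈ Arm m j :=
  ⟨1, le_refl 1, by norm_num, by simp [armDir]⟩

lemma one_le_abs_of_mem {z : ℂ} (hz : z ∈ Lsun m) : 1 ≤ Complex.abs z := by
  rcases hz with h | h
  · rw [mem_sphere_iff_abs.mp h]
  · simp only [mem_iUnion] at h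
    obtain ⟨j, _, hj⟩ := h
    obtain ⟨r, hr1, _, hre⟩ := mem_arm_iff.mp hj
    rw [abs_of_mem_arm (by linarith) hre]; exact hr1

lemma abs_le_two_of_mem {z : ℂ} (hz : z ∈ Lsun m) : Complex.abs z ≤ 2 := by
  rcases hz with h | h
  · rw [mem_sphere_iff_abs.mp h]; norm_num
  · simp only [mem_iUnion] at h
    obtain ⟨j, _, hj⟩ := h
    obtain ⟨r, _, hr2, hre⟩ := mem_arm_iff.mp hj
    rw [abs_of_mem_arm (by linarith) hre]; exact hr2

lemma eq_armDir_of_abs_one {z : ℂ} {j : ℕ} (hz : z ∈ Arm m j) (h1 : Complex.abs z = 1) :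
    z = armDir m j := by
  obtain ⟨r, hr1, _, hre⟩ := mem_arm_iff.mp hz
  have : r = 1 := by rw [abs_of_mem_arm (by linarith) hre] at h1; exact h1
  rw [hre, this]; simp

lemma arm_subset_Lsun {j : ℕ} (hj : j < m) : Arm m j ⊆ Lsun m := fun z hz =>
  Or.inr (mem_biUnion (Finset.mem_range.mpr hj) hz)

lemma sphere_subset_Lsun : Metric.sphere (0:ℂ) 1 ⊆ Lsun m := fun z hz => Or.inl hz

/-- the closed set that `LminusArm m k` equals -/
def Cset (m k : ℕ) : Set ℂ :=
  Metric.sphere (0 : ℂ) 1 ∪ ⋃ j ∈ (Finset.range m).erase k, Arm m j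

lemma isClosed_Cset (m k : ℕ) : IsClosed (Cset m k) :=
  Metric.isClosed_sphere.union (isClosed_biUnion_finset fun j _ => isClosed_arm m j)

lemma armDir_mem_closure (hk : k < m) :
    armDir m k ∈ closure (Lsun m \ Arm m k) := by
  set θ : ℝ := 2 * Real.pi * k / m with hθ
  have hdir : armDir m k = Complex.exp ((θ:ℂ) * Complex.I) := by
    rw [armDir]; congr 1; rw [hθ]; push_cast; ring
  set u : ℕ → ℂ := fun p => Complex.exp (((θ + 1/(p+1) : ℝ) : ℂ) * Complex.I) with hu
  have habs : ∀ p, Complex.abs (u p) = 1 := fun p => Complex.norm_exp_ofReal_mul_I _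
  have hmem : ∀ p : ℕ, u p ∈ Lsun m \ Arm m k := by
    intro p
    constructor
    · exact sphere_subset_Lsun (mem_sphere_iff_abs.mpr (habs p))
    · intro hc
      have he := eq_armDir_of_abs_one hc (habs p)
      rw [hdir, hu] at he
      simp only at he
      rw [Complex.exp_eq_exp_iff_exists_int] at he
      obtain ⟨kk, hkk⟩ := he
      have h2 : (θ + 1/(p+1) : ℝ) = θ + kk * (2 * Real.pi) := by
        have : ((θ + 1/(p+1) : ℝ) : ℂ) * Complex.I
            = ((θ + kk * (2 * Real.pi) : ℝ) : ℂ) * Complex.I := by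
          push_cast at hkk ⊢; rw [hkk]; ring
        exact_mod_cast mul_right_cancel₀ Complex.I_ne_zero this
      have h3 : (1/(p+1) : ℝ) = kk * (2 * Real.pi) := by linarith
      have hp1 : (0:ℝ) < 1/(p+1) := by positivity
      have hp2 : (1/(p+1) : ℝ) ≤ 1 := by
        rw [div_le_one (by positivity)]
        have : (0:ℝ) ≤ p := Nat.cast_nonneg p
        linarith
      have hpi : (3:ℝ) < Real.pi := Real.pi_gt_three
      rcases lt_trichotomy kk 0 with hkk0 | hkk0 | hkk0
      · have hle : kk ≤ -1 := by omega
        have : (kk:ℝ) ≤ -1 := by exact_mod_cast hle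
        nlinarith
      · rw [hkk0] at h3; simp at h3; linarith
      · have : (1:ℝ) ≤ kk := by exact_mod_cast hkk0
        nlinarith
  have h1 : Filter.Tendsto (fun p : ℕ => (θ + 1/(p+1) : ℝ)) Filter.atTop (nhds θ) := by
    have := tendsto_one_div_add_atTop_nhds_zero_nat (𝕜 := ℝ)
    have h2 := this.const_add θ
    simpa using h2
  have hcont : Continuous fun x : ℝ => Complex.exp ((x:ℂ) * Complex.I) := by fun_prop
  have htend : Filter.Tendsto u Filter.atTop (nhds (armDir m k)) := by
    rw [hdir]
    have := (hcont.tendsto θ).comp h1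
    apply this.congr
    intro p
    simp only [Function.comp_apply, u]
  exact mem_closure_of_tendsto htend (Filter.Eventually.of_forall hmem)

lemma lminusArm_eq (hk : k < m) : LminusArm m k = Cset m k := by
  apply le_antisymm
  · apply closure_minimal _ (isClosed_Cset m k)
    rintro z ⟨hz, hnz⟩
    rcases hz with h | h
    · exact Or.inl h
    · simp only [mem_iUnion] at h
      obtain ⟨j, hjm, hj⟩ := h
      simp only [Finset.mem_range] at hjm
      have hjk : j ≠ k := fun he => hnz (he ▸ hj)
      exact Or.inr (mem_biUnion (Finset.mem_erase.mpr ⟨hjk, Finset.mem_range.mpr hjm⟩) hj)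
  · rintro z (h | h)
    · by_cases hz : z = armDir m k
      · rw [hz]; exact armDir_mem_closure hk
      · apply subset_closure
        refine ⟨sphere_subset_Lsun h, fun hc => hz ?_⟩
        exact eq_armDir_of_abs_one hc (mem_sphere_iff_abs.mp h)
    · simp only [mem_iUnion] at h
      obtain ⟨j, hjm, hj⟩ := h
      simp only [Finset.mem_erase, Finset.mem_range] at hjm
      apply subset_closure
      refine ⟨arm_subset_Lsun hjm.2 hj, fun hc => ?_⟩
      have := arm_disjoint m hjm.2 hk hjm.1
      exact absurd (mem_inter hj hc) (by rw [this]; exact notMem_empty z)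



end B

section C
variable {m : ℕ}

lemma mem_arm_of_not_Cset {z : ℂ} {i : ℕ} (hz : z ∈ Lsun m) (h : z ∉ Cset m i) :
    z ∈ Arm m i := by
  rcases hz with hs | ha
  · exact absurd (Or.inl hs) h
  · simp only [mem_iUnion] at ha
    obtain ⟨j, hjm, hj⟩ := ha
    simp only [Finset.mem_range] at hjm
    by_cases hji : j = i
    · exact hji ▸ hj
    · exact absurd (Or.inr (mem_biUnion (Finset.mem_erase.mpr ⟨hji, Finset.mem_range.mpr hjm⟩) hj)) h

lemma not_mem_Cset {z : ℂ} {i : ℕ} (hi : i < m) (hz : z ∈ Arm m i) (habs : 1 < Complex.abs z) :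
    z ∉ Cset m i := by
  rintro (hs | ha)
  · rw [mem_sphere_iff_abs.mp hs] at habs; exact lt_irrefl 1 habs
  · simp only [mem_iUnion] at ha
    obtain ⟨j, hjm, hj⟩ := ha
    simp only [Finset.mem_erase, Finset.mem_range] at hjm
    have := arm_disjoint m hi hjm.2 (fun h => hjm.1 (h ▸ rfl))
    exact absurd (mem_inter hz hj) (by rw [this]; exact notMem_empty z)

/-- depth of a point into arm j -/
def phi (m j : ℕ) : ↥(Lsun m) → ℝ :=
  fun z => if (z:ℂ) ∈ Arm m j then Complex.abs (z:ℂ) - 1 else 0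

lemma phi_nonneg (j : ℕ) (z : ↥(Lsun m)) : 0 ≤ phi m j z := by
  rw [phi]
  split
  · have := one_le_abs_of_mem z.2; linarith
  · exact le_refl 0

lemma phi_le (j : ℕ) (z : ↥(Lsun m)) : phi m j z ≤ Complex.abs (z:ℂ) - 1 := by
  rw [phi]
  split
  · exact le_refl _
  · have := one_le_abs_of_mem z.2; linarith

lemma phi_eq_of_mem {j : ℕ} {z : ↥(Lsun m)} (h : (z:ℂ) ∈ Arm m j) :
    phi m j z = Complex.abs (z:ℂ) - 1 := if_pos h

lemma phi_eq_zero_of_not_mem {j : ℕ} {z : ↥(Lsun m)} (h : (z:ℂ) ∉ Arm m j) :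
    phi m j z = 0 := if_neg h

lemma phi_pos {j : ℕ} {z : ↥(Lsun m)} (h : 0 < phi m j z) :
    (z:ℂ) ∈ Arm m j ∧ 1 < Complex.abs (z:ℂ) := by
  by_cases hm : (z:ℂ) ∈ Arm m j
  · refine ⟨hm, ?_⟩
    rw [phi_eq_of_mem hm] at h; linarith
  · rw [phi_eq_zero_of_not_mem hm] at h; exact absurd h (lt_irrefl 0)

lemma continuous_abs_val : Continuous fun z : ↥(Lsun m) => Complex.abs (z:ℂ) :=
  continuous_norm.comp continuous_subtype_val

lemma continuous_phi {j : ℕ} (hj : j < m) : Continuous (phi m j) := by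
  rw [continuous_iff_continuousAt]
  intro z₀
  rcases eq_or_lt_of_le (one_le_abs_of_mem z₀.2) with h1 | h1
  · -- |z₀| = 1, squeeze
    have hφ0 : phi m j z₀ = 0 := by
      rw [phi]; split
      · rw [← h1]; ring
      · rfl
    rw [ContinuousAt, hφ0]
    have htends : Filter.Tendsto (fun z : ↥(Lsun m) => Complex.abs (z:ℂ) - 1) (nhds z₀) (nhds 0) := by
      have hc : Continuous (fun z : ↥(Lsun m) => Complex.abs (z:ℂ) - 1) :=
        continuous_abs_val.sub continuous_const
      have := hc.continuousAt (x := z₀)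
      rw [ContinuousAt, ← h1] at this
      simpa using this
    exact tendsto_of_tendsto_of_tendsto_of_le_of_le tendsto_const_nhds htends
      (fun z => phi_nonneg j z) (fun z => phi_le j z)
  · -- |z₀| > 1 : z₀ in a unique arm i
    have hz₀ : (z₀:ℂ) ∈ Lsun m := z₀.2
    have hi : ∃ i, i < m ∧ (z₀:ℂ) ∈ Arm m i := by
      rcases hz₀ with hs | ha
      · rw [mem_sphere_iff_abs.mp hs] at h1; exact absurd h1 (lt_irrefl 1)
      · simp only [mem_iUnion] at ha
        obtain ⟨i, him, hi⟩ := ha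
        exact ⟨i, Finset.mem_range.mp him, hi⟩
    obtain ⟨i, him, hzi⟩ := hi
    set W : Set ↥(Lsun m) := {z | (z:ℂ) ∉ Cset m i} with hW
    have hWopen : IsOpen W := by
      have : W = Subtype.val ⁻¹' (Cset m i)ᶜ := rfl
      rw [this]
      exact (isClosed_Cset m i).isOpen_compl.preimage continuous_subtype_val
    have hz₀W : z₀ ∈ W := not_mem_Cset him hzi h1
    have hWn : W ∈ nhds z₀ := hWopen.mem_nhds hz₀W
    by_cases hij : i = j
    · subst hij
      have hev : phi m i =ᶠ[nhds z₀] (fun z => Complex.abs (z:ℂ) - 1) := by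
        apply Filter.eventually_of_mem hWn
        intro z hz
        exact phi_eq_of_mem (mem_arm_of_not_Cset z.2 hz)
      exact ((continuous_abs_val.sub continuous_const).continuousAt).congr hev.symm
    · have hev : phi m j =ᶠ[nhds z₀] (fun _ => 0) := by
        apply Filter.eventually_of_mem hWn
        intro z hz
        apply phi_eq_zero_of_not_mem
        intro hc
        have hzi' := mem_arm_of_not_Cset z.2 hz
        have := arm_disjoint m him hj hij
        exact absurd (mem_inter hzi' hc) (by rw [this]; exact notMem_empty _)
      exact continuousAt_const.congr hev.symm

/-- total depth into arms 0 and 1 -/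
def psi (m : ℕ) : ↥(Lsun m) → ℝ := fun z => phi m 0 z + phi m 1 z

lemma psi_nonneg (z : ↥(Lsun m)) : 0 ≤ psi m z :=
  add_nonneg (phi_nonneg 0 z) (phi_nonneg 1 z)

lemma psi_le (hm : 2 ≤ m) (z : ↥(Lsun m)) : psi m z ≤ Complex.abs (z:ℂ) - 1 := by
  rw [psi]
  by_cases h0 : (z:ℂ) ∈ Arm m 0
  · have h1 : (z:ℂ) ∉ Arm m 1 := by
      intro hc
      have := arm_disjoint m (by omega) (by omega) (by omega : (0:ℕ) ≠ 1)
      exact absurd (mem_inter h0 hc) (by rw [this]; exact notMem_empty _)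
    rw [phi_eq_of_mem h0, phi_eq_zero_of_not_mem h1]; ring_nf; exact le_refl _
  · rw [phi_eq_zero_of_not_mem h0]
    have := phi_le 1 z; linarith

lemma continuous_psi (hm : 2 ≤ m) : Continuous (psi m) :=
  (continuous_phi (by omega)).add (continuous_phi (by omega))

lemma psi_eq_of_mem_arm01 {j : ℕ} (hm : 2 ≤ m) (hj : j < 2) {z : ↥(Lsun m)}
    (h : (z:ℂ) ∈ Arm m j) : psi m z = Complex.abs (z:ℂ) - 1 := by
  have hdisj := arm_disjoint m (show 0 < m by omega) (show 1 < m by omega) (by omega : (0:ℕ) ≠ 1)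
  interval_cases j
  · have h1 : (z:ℂ) ∉ Arm m 1 := fun hc =>
      absurd (mem_inter h hc) (by rw [hdisj]; exact notMem_empty _)
    rw [psi, phi_eq_of_mem h, phi_eq_zero_of_not_mem h1]; ring
  · have h0 : (z:ℂ) ∉ Arm m 0 := fun hc =>
      absurd (mem_inter hc h) (by rw [hdisj]; exact notMem_empty _)
    rw [psi, phi_eq_zero_of_not_mem h0, phi_eq_of_mem h]; ring

/-- scaled point stays in the sun graph -/
lemma scale_mem {z : ℂ} {c : ℝ} (hz : z ∈ Lsun m) (hc1 : 1 ≤ c) (hc2 : c ≤ Complex.abs z) :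
    z * ((c:ℂ) / (Complex.abs z : ℝ)) ∈ Lsun m := by
  rcases hz with hs | ha
  · have h1 : Complex.abs z = 1 := mem_sphere_iff_abs.mp hs
    have hc : c = 1 := le_antisymm (h1 ▸ hc2) hc1
    have hz' : z ∈ Lsun m := Set.mem_union_left _ hs
    rw [h1, hc]
    have he : z * ((1:ℝ):ℂ) / ((1:ℝ):ℂ) = z := by push_cast; ring
    push_cast
    simpa using hz'
  · simp only [mem_iUnion] at ha
    obtain ⟨j, hjm, hj⟩ := ha
    obtain ⟨r, hr1, hr2, hre⟩ := mem_arm_iff.mp hj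
    have habs : Complex.abs z = r := abs_of_mem_arm (by linarith) hre
    have hr0 : (0:ℝ) < r := by linarith
    apply arm_subset_Lsun (Finset.mem_range.mp hjm)
    refine mem_arm_iff.mpr ⟨c, hc1, by rw [habs] at hc2; linarith, ?_⟩
    rw [habs, hre]
    have : (r:ℂ) ≠ 0 := by exact_mod_cast (by linarith : r ≠ 0)
    field_simp

-- chunk D: the move map
/-- the clamped amount by which a point at `z` moves inward, given budget `s` -/
def amt (m : ℕ) (z : ↥(Lsun m)) (s : ℝ) : ℝ := min (max s 0) (psi m z)

lemma amt_nonneg (z : ↥(Lsun m)) (s : ℝ) : 0 ≤ amt m z s :=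
  le_min (le_max_right s 0) (psi_nonneg z)

lemma amt_le_psi (z : ↥(Lsun m)) (s : ℝ) : amt m z s ≤ psi m z := min_le_right _ _

def muVal (m : ℕ) (z : ↥(Lsun m)) (s : ℝ) : ℂ :=
  (z:ℂ) * (((max 1 (Complex.abs (z:ℂ) - amt m z s) : ℝ) : ℂ) / ((Complex.abs (z:ℂ) : ℝ) : ℂ))

lemma factor_one_le (z : ↥(Lsun m)) (s : ℝ) : 1 ≤ max 1 (Complex.abs (z:ℂ) - amt m z s) :=
  le_max_left _ _

lemma factor_le_abs (z : ↥(Lsun m)) (s : ℝ) :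
    max 1 (Complex.abs (z:ℂ) - amt m z s) ≤ Complex.abs (z:ℂ) := by
  apply max_le (one_le_abs_of_mem z.2)
  have := amt_nonneg z s; linarith

lemma muVal_mem (z : ↥(Lsun m)) (s : ℝ) : muVal m z s ∈ Lsun m :=
  scale_mem z.2 (factor_one_le z s) (factor_le_abs z s)

/-- the point `z` moved inward by (clamped) budget `s` -/
def mu (m : ℕ) (z : ↥(Lsun m)) (s : ℝ) : ↥(Lsun m) := ⟨muVal m z s, muVal_mem z s⟩

lemma abs_ne_zero' (z : ↥(Lsun m)) : ((Complex.abs (z:ℂ) : ℝ) : ℂ) ≠ 0 := by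
  have := one_le_abs_of_mem z.2
  exact_mod_cast (by linarith : Complex.abs (z:ℂ) ≠ 0)

lemma abs_muVal (z : ↥(Lsun m)) (s : ℝ) :
    Complex.abs (muVal m z s) = max 1 (Complex.abs (z:ℂ) - amt m z s) := by
  rw [muVal, Complex.norm_mul, Complex.norm_div, Complex.norm_real, Real.norm_eq_abs, Complex.norm_real, Real.norm_eq_abs]
  have h0 : (0:ℝ) < Complex.abs (z:ℂ) := lt_of_lt_of_le one_pos (one_le_abs_of_mem z.2)
  have h1 : (0:ℝ) < max 1 (Complex.abs (z:ℂ) - amt m z s) :=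
    lt_of_lt_of_le one_pos (factor_one_le z s)
  rw [abs_of_pos h1, abs_of_pos h0]
  field_simp

lemma mu_eq_self {z : ↥(Lsun m)} {s : ℝ} (h : amt m z s = 0) : mu m z s = z := by
  apply Subtype.ext
  show muVal m z s = z
  rw [muVal, h, sub_zero, max_eq_right (one_le_abs_of_mem z.2)]
  rw [div_self (abs_ne_zero' z), mul_one]

lemma mu_eq_self_of_nonpos {z : ↥(Lsun m)} {s : ℝ} (h : s ≤ 0) : mu m z s = z :=
  mu_eq_self (by rw [amt, max_eq_right h, min_eq_left (psi_nonneg z)])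

lemma mu_eq_self_of_psi_zero {z : ↥(Lsun m)} {s : ℝ} (h : psi m z = 0) : mu m z s = z :=
  mu_eq_self (by rw [amt, h]; exact min_eq_right (le_max_right s 0))

lemma mu_mem_arm {j : ℕ} {z : ↥(Lsun m)} (hz : (z:ℂ) ∈ Arm m j) (s : ℝ) :
    ((mu m z s : ↥(Lsun m)) : ℂ) ∈ Arm m j := by
  obtain ⟨r, hr1, hr2, hre⟩ := mem_arm_iff.mp hz
  have habs : Complex.abs (z:ℂ) = r := abs_of_mem_arm (by linarith) hre
  refine mem_arm_iff.mpr ⟨max 1 (Complex.abs (z:ℂ) - amt m z s), factor_one_le z s, ?_, ?_⟩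
  · have := factor_le_abs z s; rw [habs] at this ⊢; linarith
  · show muVal m z s = _
    rw [muVal, habs, hre]
    have : (r:ℂ) ≠ 0 := by exact_mod_cast (by linarith : r ≠ 0)
    field_simp

lemma continuous_mu (hm : 2 ≤ m) :
    Continuous (fun p : ↥(Lsun m) × ℝ => mu m p.1 p.2) := by
  apply Continuous.subtype_mk
  show Continuous fun p : ↥(Lsun m) × ℝ => muVal m p.1 p.2
  apply Continuous.mul (continuous_subtype_val.comp continuous_fst)
  apply Continuous.div
  · apply Continuous.comp Complex.continuous_ofReal
    apply Continuous.max continuous_const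
    apply Continuous.sub (continuous_abs_val.comp continuous_fst)
    apply Continuous.min (continuous_snd.max continuous_const)
    exact (continuous_psi hm).comp continuous_fst
  · exact Complex.continuous_ofReal.comp (continuous_abs_val.comp continuous_fst)
  · exact fun p => abs_ne_zero' p.1

end C

section E
variable {X : Type*} [TopologicalSpace X]

lemma continuous_confProj (n : ℕ) : Continuous (confProj n X) :=
  continuous_coinduced_rng

lemma range_fin_two (f : Fin 2 → X) : Set.range f = {f 0, f 1} := by
  ext x
  constructor
  · rintro ⟨i, rfl⟩; fin_cases i <;> simp
  · rintro (rfl | rfl) <;> [exact ⟨0, rfl⟩; exact ⟨1, rfl⟩]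

lemma inj_pair {a b : X} (h : a ≠ b) : Function.Injective ![a, b] := by
  intro i j hij
  fin_cases i <;> fin_cases j <;> simp_all

def mkOrd (a b : X) (h : a ≠ b) : OrdConf 2 X := ⟨![a, b], inj_pair h⟩

lemma confProj_mkOrd (a b : X) (h : a ≠ b) :
    (confProj 2 X (mkOrd a b h)).1 = {a, b} := by
  show Set.range ![a, b] = {a, b}
  rw [range_fin_two]; simp

lemma UConf.ext {c d : UConf 2 X} (h : c.1 = d.1) : c = d := Subtype.ext h

lemma exists_pair (c : UConf 2 X) : ∃ a b : X, a ≠ b ∧ c.1 = {a, b} :=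
  Set.ncard_eq_two.mp c.2.2

lemma surjective_confProj : Function.Surjective (confProj 2 X) := by
  intro c
  obtain ⟨a, b, hab, hc⟩ := exists_pair c
  exact ⟨mkOrd a b hab, UConf.ext (by rw [confProj_mkOrd a b hab, hc])⟩

lemma eq_pair_of_mem {c : UConf 2 X} {x y : X} (hx : x ∈ c.1) (hy : y ∈ c.1) (hxy : x ≠ y) :
    c.1 = {x, y} := by
  obtain ⟨a, b, hab, hc⟩ := exists_pair c
  rw [hc] at hx hy ⊢
  rcases hx with rfl | rfl <;> rcases hy with rfl | rfl
  · exact absurd rfl hxy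
  · rfl
  · exact Set.pair_comm _ _
  · exact absurd rfl hxy

/-- swap involution on ordered configurations -/
def swapOrd : OrdConf 2 X → OrdConf 2 X := fun f =>
  ⟨![f.1 1, f.1 0], inj_pair (fun hc => by have := f.2 hc; simp at this)⟩

lemma swapOrd_swapOrd (f : OrdConf 2 X) : swapOrd (swapOrd f) = f := by
  apply Subtype.ext
  funext i
  show ![ ![f.1 1, f.1 0] 1, ![f.1 1, f.1 0] 0] i = f.1 i
  fin_cases i <;> simp

lemma continuous_swapOrd : Continuous (swapOrd (X := X)) := by
  apply Continuous.subtype_mk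
  apply continuous_pi
  intro i
  fin_cases i
  · exact (continuous_apply (1 : Fin 2)).comp continuous_subtype_val
  · exact (continuous_apply (0 : Fin 2)).comp continuous_subtype_val

lemma confProj_swapOrd (f : OrdConf 2 X) : confProj 2 X (swapOrd f) = confProj 2 X f := by
  apply UConf.ext
  show Set.range ![f.1 1, f.1 0] = Set.range f.1
  rw [range_fin_two f.1, range_fin_two]
  simp [Set.pair_comm]

lemma fiber_confProj {f g : OrdConf 2 X} (h : confProj 2 X f = confProj 2 X g) :
    g = f ∨ g = swapOrd f := by
  have hr : Set.range f.1 = Set.range g.1 := congrArg Subtype.val h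
  rw [range_fin_two, range_fin_two] at hr
  have h0 : g.1 0 ∈ ({f.1 0, f.1 1} : Set X) := by rw [hr]; exact Or.inl rfl
  have h1 : g.1 1 ∈ ({f.1 0, f.1 1} : Set X) := by rw [hr]; exact Or.inr rfl
  have hne : g.1 0 ≠ g.1 1 := fun hc => by
    have := g.2 hc; simp at this
  rcases h0 with h0 | h0 <;> rcases h1 with h1 | h1
  · exact absurd (h0.trans h1.symm) hne
  · left; apply Subtype.ext; funext i; fin_cases i <;> simp_all
  · right; apply Subtype.ext; funext i
    fin_cases i <;> simp_all [swapOrd]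
  · exact absurd (h0.trans h1.symm) hne

lemma saturation (V : Set (OrdConf 2 X)) :
    confProj 2 X ⁻¹' (confProj 2 X '' V) = V ∪ swapOrd ⁻¹' V := by
  ext g
  constructor
  · rintro ⟨f, hf, hfg⟩
    rcases fiber_confProj hfg with rfl | rfl
    · exact Or.inl hf
    · right
      show swapOrd (swapOrd f) ∈ V
      rwa [swapOrd_swapOrd]
  · rintro (hg | hg)
    · exact ⟨g, hg, rfl⟩
    · exact ⟨swapOrd g, hg, confProj_swapOrd g⟩

lemma isOpenMap_confProj : IsOpenMap (confProj 2 X) := by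
  intro V hV
  rw [isOpen_coinduced, saturation]
  exact hV.union (hV.preimage continuous_swapOrd)

lemma isQuotientMap_confProj : IsQuotientMap (confProj 2 X) :=
  isOpenMap_confProj.isQuotientMap (continuous_confProj 2) surjective_confProj

lemma isOpenQuotientMap_confProj : IsOpenQuotientMap (confProj 2 X) :=
  ⟨surjective_confProj, continuous_confProj 2, isOpenMap_confProj⟩

lemma isQuotientMap_confProj_prod :
    IsQuotientMap (Prod.map (confProj 2 X) (id : unitInterval → unitInterval)) :=
  (isOpenQuotientMap_confProj.prodMap .id).isQuotientMap

/-- max of a function over an (unordered) configuration -/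
def maxOver (φ : X → ℝ) (c : UConf 2 X) : ℝ := sSup (φ '' c.1)

lemma maxOver_pair {φ : X → ℝ} {c : UConf 2 X} {a b : X} (hc : c.1 = {a, b}) :
    maxOver φ c = max (φ a) (φ b) := by
  rw [maxOver, hc, Set.image_pair, csSup_pair]

lemma maxOver_confProj (φ : X → ℝ) (f : OrdConf 2 X) :
    maxOver φ (confProj 2 X f) = max (φ (f.1 0)) (φ (f.1 1)) :=
  maxOver_pair (by show Set.range f.1 = _; rw [range_fin_two])

lemma continuous_maxOver {φ : X → ℝ} (hφ : Continuous φ) : Continuous (maxOver φ) := by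
  rw [isQuotientMap_confProj.continuous_iff]
  have : maxOver φ ∘ confProj 2 X = fun f : OrdConf 2 X => max (φ (f.1 0)) (φ (f.1 1)) := by
    funext f; exact maxOver_confProj φ f
  rw [this]
  exact Continuous.max (hφ.comp ((continuous_apply _).comp continuous_subtype_val))
    (hφ.comp ((continuous_apply _).comp continuous_subtype_val))

lemma maxOver_nonneg {φ : X → ℝ} (hφ : ∀ x, 0 ≤ φ x) (c : UConf 2 X) : 0 ≤ maxOver φ c := by
  obtain ⟨a, b, _, hc⟩ := exists_pair c
  rw [maxOver_pair hc]
  exact le_max_of_le_left (hφ a)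

lemma maxOver_pos {φ : X → ℝ} {c : UConf 2 X} (h : 0 < maxOver φ c) :
    ∃ x ∈ c.1, 0 < φ x := by
  obtain ⟨a, b, _, hc⟩ := exists_pair c
  rw [maxOver_pair hc] at h
  rcases max_cases (φ a) (φ b) with ⟨he, _⟩ | ⟨he, _⟩
  · exact ⟨a, by rw [hc]; exact Or.inl rfl, by rwa [he] at h⟩
  · exact ⟨b, by rw [hc]; exact Or.inr rfl, by rwa [he] at h⟩

lemma maxOver_eq_zero {φ : X → ℝ} (hφ : ∀ x, 0 ≤ φ x) {c : UConf 2 X}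
    (h : maxOver φ c = 0) : ∀ x ∈ c.1, φ x = 0 := by
  intro x hx
  obtain ⟨a, b, _, hc⟩ := exists_pair c
  rw [maxOver_pair hc] at h
  have ha := hφ a; have hb := hφ b
  have hma := le_max_left (φ a) (φ b); have hmb := le_max_right (φ a) (φ b)
  rw [hc] at hx
  rcases hx with rfl | rfl <;> linarith

end E


-- chunk F
section F
variable {m : ℕ}

/-- the set `A` -/
def Aset (m : ℕ) : Set (UConf 2 ↥(Lsun m)) :=
  {c | (∀ z : ↥(Lsun m), z ∈ c.1 → (z : ℂ) ∈ LminusArm m 0) ∨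
      ∀ z : ↥(Lsun m), z ∈ c.1 → (z : ℂ) ∈ LminusArm m 1}

/-- the set `B` -/
def Bset (m : ℕ) : Set (UConf 2 ↥(Lsun m)) :=
  {c | (∃ z : ↥(Lsun m), z ∈ c.1 ∧ (z : ℂ) ∈ Arm m 0) ∧
      ∃ z : ↥(Lsun m), z ∈ c.1 ∧ (z : ℂ) ∈ Arm m 1}

def Phi (m j : ℕ) : UConf 2 ↥(Lsun m) → ℝ := maxOver (phi m j)

def del (m : ℕ) : UConf 2 ↥(Lsun m) → ℝ := fun c => min (Phi m 0 c) (Phi m 1 c)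

lemma continuous_Phi {j : ℕ} (hj : j < m) : Continuous (Phi m j) :=
  continuous_maxOver (continuous_phi hj)

lemma continuous_del (hm : 2 ≤ m) : Continuous (del m) :=
  (continuous_Phi (by omega)).min (continuous_Phi (by omega))

lemma Phi_nonneg (j : ℕ) (c : UConf 2 ↥(Lsun m)) : 0 ≤ Phi m j c :=
  maxOver_nonneg (phi_nonneg j) c

lemma del_nonneg (c : UConf 2 ↥(Lsun m)) : 0 ≤ del m c :=
  le_min (Phi_nonneg 0 c) (Phi_nonneg 1 c)

lemma maxOver_eq_zero_of {X : Type*} [TopologicalSpace X] {φ : X → ℝ} {c : UConf 2 X}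
    (h : ∀ x ∈ c.1, φ x = 0) : maxOver φ c = 0 := by
  obtain ⟨a, b, _, hc⟩ := exists_pair c
  rw [maxOver_pair hc, h a (by rw [hc]; exact Or.inl rfl), h b (by rw [hc]; exact Or.inr rfl)]
  exact max_self 0

lemma not_mem_arm_of_mem_arm {i j : ℕ} (hi : i < m) (hj : j < m) (hij : i ≠ j) {z : ℂ}
    (hz : z ∈ Arm m i) : z ∉ Arm m j := fun hc =>
  absurd (mem_inter hz hc) (by rw [arm_disjoint m hi hj hij]; exact notMem_empty z)

lemma phi_eq_zero_of_mem_Cset {j : ℕ} (hj : j < m) {z : ↥(Lsun m)}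
    (hz : (z:ℂ) ∈ Cset m j) : phi m j z = 0 := by
  rcases eq_or_lt_of_le (phi_nonneg j z) with h | h
  · exact h.symm
  · obtain ⟨harm, habs⟩ := phi_pos h
    rcases hz with hs | ha
    · rw [mem_sphere_iff_abs.mp hs] at habs; exact absurd habs (lt_irrefl 1)
    · simp only [mem_iUnion] at ha
      obtain ⟨i, him, hi⟩ := ha
      simp only [Finset.mem_erase, Finset.mem_range] at him
      exact absurd hi (not_mem_arm_of_mem_arm hj him.2 (fun h' => him.1 h'.symm) harm)

lemma mem_Cset_of_phi_zero {j : ℕ} (hj : j < m) {z : ↥(Lsun m)}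
    (hz : phi m j z = 0) : (z:ℂ) ∈ Cset m j := by
  rcases z.2 with hs | ha
  · exact Or.inl hs
  · simp only [mem_iUnion] at ha
    obtain ⟨i, him, hi⟩ := ha
    simp only [Finset.mem_range] at him
    by_cases hij : i = j
    · subst hij
      rw [phi_eq_of_mem hi] at hz
      have : Complex.abs (z:ℂ) = 1 := by linarith
      exact Or.inl (mem_sphere_iff_abs.mpr this)
    · exact Or.inr (mem_biUnion (Finset.mem_erase.mpr ⟨hij, Finset.mem_range.mpr him⟩) hi)

lemma mem_Aset_iff (hm : 2 ≤ m) {c : UConf 2 ↥(Lsun m)} :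
    c ∈ Aset m ↔ del m c = 0 := by
  have h0 : (0:ℕ) < m := by omega
  have h1 : (1:ℕ) < m := by omega
  constructor
  · intro hc
    have key : ∀ j, j < m → (∀ z : ↥(Lsun m), z ∈ c.1 → (z : ℂ) ∈ LminusArm m j) →
        Phi m j c = 0 := by
      intro j hj hall
      apply maxOver_eq_zero_of
      intro x hx
      have := hall x hx
      rw [lminusArm_eq hj] at this
      exact phi_eq_zero_of_mem_Cset hj this
    rcases hc with hc | hc
    · have := key 0 h0 hc
      have h2 := Phi_nonneg 1 c
      rw [del, this]
      rcases le_total (0:ℝ) (Phi m 1 c) with h' | h'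
      · exact min_eq_left h'
      · exact le_antisymm (le_trans (min_le_left _ _) (le_refl 0)) (le_min (le_refl 0) h2)
    · have := key 1 h1 hc
      have h2 := Phi_nonneg 0 c
      rw [del, this]
      exact min_eq_right h2
  · intro hdel
    have : Phi m 0 c = 0 ∨ Phi m 1 c = 0 := by
      rcases le_total (Phi m 0 c) (Phi m 1 c) with h | h
      · left; rw [del, min_eq_left h] at hdel; exact hdel
      · right; rw [del, min_eq_right h] at hdel; exact hdel
    rcases this with h | h
    · left
      intro z hz
      rw [lminusArm_eq h0]
      exact mem_Cset_of_phi_zero h0 (maxOver_eq_zero (phi_nonneg 0) h z hz)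
    · right
      intro z hz
      rw [lminusArm_eq h1]
      exact mem_Cset_of_phi_zero h1 (maxOver_eq_zero (phi_nonneg 1) h z hz)

/-- structure of configurations with positive `del`: one point strictly inside arm 0,
one point strictly inside arm 1 -/
lemma del_pos_struct (hm : 2 ≤ m) {c : UConf 2 ↥(Lsun m)} (h : 0 < del m c) :
    ∃ x y : ↥(Lsun m), x ≠ y ∧ c.1 = {x, y} ∧ (x:ℂ) ∈ Arm m 0 ∧ (y:ℂ) ∈ Arm m 1 ∧
      phi m 0 x = Complex.abs (x:ℂ) - 1 ∧ phi m 1 y = Complex.abs (y:ℂ) - 1 ∧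
      Phi m 0 c = Complex.abs (x:ℂ) - 1 ∧ Phi m 1 c = Complex.abs (y:ℂ) - 1 ∧
      del m c = min (Complex.abs (x:ℂ) - 1) (Complex.abs (y:ℂ) - 1) := by
  have h0 : (0:ℕ) < m := by omega
  have h1 : (1:ℕ) < m := by omega
  obtain ⟨x, hxc, hx⟩ := maxOver_pos (lt_min_iff.mp h).1
  obtain ⟨y, hyc, hy⟩ := maxOver_pos (lt_min_iff.mp h).2
  obtain ⟨hxa, _⟩ := phi_pos hx
  obtain ⟨hya, _⟩ := phi_pos hy
  have hxy : x ≠ y := by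
    intro he
    exact (not_mem_arm_of_mem_arm h0 h1 (by omega) hxa) (he ▸ hya)
  have hc : c.1 = {x, y} := eq_pair_of_mem hxc hyc hxy
  have hphix : phi m 0 x = Complex.abs (x:ℂ) - 1 := phi_eq_of_mem hxa
  have hphiy : phi m 1 y = Complex.abs (y:ℂ) - 1 := phi_eq_of_mem hya
  have hPhi0 : Phi m 0 c = Complex.abs (x:ℂ) - 1 := by
    rw [Phi, maxOver_pair hc, hphix,
      phi_eq_zero_of_not_mem (not_mem_arm_of_mem_arm h1 h0 (by omega) hya)]
    exact max_eq_left (by rw [← hphix]; exact phi_nonneg 0 x)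
  have hPhi1 : Phi m 1 c = Complex.abs (y:ℂ) - 1 := by
    rw [Phi, maxOver_pair hc, hphiy,
      phi_eq_zero_of_not_mem (not_mem_arm_of_mem_arm h0 h1 (by omega) hxa)]
    exact max_eq_right (by rw [← hphiy]; exact phi_nonneg 1 y)
  exact ⟨x, y, hxy, hc, hxa, hya, hphix, hphiy, hPhi0, hPhi1, by rw [del, hPhi0, hPhi1]⟩

lemma mu_injOn (hm : 2 ≤ m) (c : UConf 2 ↥(Lsun m)) {t : ℝ} (ht : 0 ≤ t) :
    Set.InjOn (fun z => mu m z (t * del m c)) c.1 := by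
  rcases eq_or_lt_of_le (del_nonneg c) with hd | hd
  · intro p _ q _ h
    simp only at h
    have hz : t * del m c ≤ 0 := by rw [← hd, mul_zero]
    rwa [mu_eq_self_of_nonpos hz, mu_eq_self_of_nonpos hz] at h
  · obtain ⟨x, y, hxy, hc, hxa, hya, _, _, _, _, _⟩ := del_pos_struct hm hd
    have h0 : (0:ℕ) < m := by omega
    have h1 : (1:ℕ) < m := by omega
    have key : ∀ s : ℝ, mu m x s ≠ mu m y s := by
      intro s he
      have hx' := mu_mem_arm hxa s
      have hy' := mu_mem_arm hya s
      rw [he] at hx'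
      exact (not_mem_arm_of_mem_arm h1 h0 (by omega) hy') hx'
    intro p hp q hq h
    rw [hc] at hp hq
    rcases hp with rfl | rfl <;> rcases hq with rfl | rfl
    · rfl
    · exact absurd h (key _)
    · exact absurd h.symm (key _)
    · rfl

/-- the (unordered) homotopy -/
def HU (m : ℕ) (hm : 2 ≤ m) (p : UConf 2 ↥(Lsun m) × unitInterval) : UConf 2 ↥(Lsun m) :=
  ⟨(fun z => mu m z ((p.2 : ℝ) * del m p.1)) '' p.1.1,
    p.1.2.1.image _, by
      rw [Set.ncard_image_of_injOn (mu_injOn hm p.1 p.2.2.1)]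
      exact p.1.2.2⟩

/-- the (ordered) homotopy -/
def GOrd (m : ℕ) (hm : 2 ≤ m) (p : OrdConf 2 ↥(Lsun m) × unitInterval) :
    OrdConf 2 ↥(Lsun m) :=
  ⟨fun i => mu m (p.1.1 i) ((p.2 : ℝ) * del m (confProj 2 _ p.1)), by
    intro i j hij
    apply p.1.2
    have := mu_injOn hm (confProj 2 _ p.1) (t := (p.2 : ℝ)) p.2.2.1
    exact this ⟨i, rfl⟩ ⟨j, rfl⟩ hij⟩

lemma HU_comp (hm : 2 ≤ m) :
    HU m hm ∘ (Prod.map (confProj 2 ↥(Lsun m)) (id : unitInterval → unitInterval)) =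
      confProj 2 ↥(Lsun m) ∘ GOrd m hm := by
  funext p
  apply UConf.ext
  show (fun z => mu m z _) '' Set.range p.1.1 = Set.range _
  rw [← Set.range_comp]
  rfl

lemma continuous_GOrd (hm : 2 ≤ m) : Continuous (GOrd m hm) := by
  apply Continuous.subtype_mk
  apply continuous_pi
  intro i
  have hmu := continuous_mu hm
  have hg : Continuous fun a : OrdConf 2 ↥(Lsun m) × unitInterval =>
      ((a.1.1 i : ↥(Lsun m)), ((a.2:ℝ) * del m (confProj 2 ↥(Lsun m) a.1))) := by
    apply Continuous.prodMk
    · exact (continuous_apply i).comp (continuous_subtype_val.comp continuous_fst)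
    · exact ((continuous_subtype_val.comp continuous_snd).mul
        ((continuous_del hm).comp ((continuous_confProj 2).comp continuous_fst)))
  exact hmu.comp hg

lemma continuous_HU (hm : 2 ≤ m) : Continuous (HU m hm) := by
  rw [isQuotientMap_confProj_prod.continuous_iff]
  rw [show HU m hm ∘ (Prod.map (confProj 2 ↥(Lsun m)) id) = confProj 2 ↥(Lsun m) ∘ GOrd m hm
    from HU_comp hm]
  exact (continuous_confProj 2).comp (continuous_GOrd hm)

lemma HU_eq_self (hm : 2 ≤ m) {c : UConf 2 ↥(Lsun m)} {t : unitInterval}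
    (h : (t:ℝ) * del m c ≤ 0) : HU m hm (c, t) = c := by
  apply UConf.ext
  show (fun z => mu m z ((t:ℝ) * del m c)) '' c.1 = c.1
  have : ∀ z ∈ c.1, mu m z ((t:ℝ) * del m c) = z := fun z _ => mu_eq_self_of_nonpos h
  rw [Set.image_congr this, Set.image_id']

lemma HU_zero (hm : 2 ≤ m) (c : UConf 2 ↥(Lsun m)) : HU m hm (c, 0) = c :=
  HU_eq_self hm (by simp)

lemma HU_of_del_zero (hm : 2 ≤ m) {c : UConf 2 ↥(Lsun m)} (h : del m c = 0)
    (t : unitInterval) : HU m hm (c, t) = c :=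
  HU_eq_self hm (by rw [h, mul_zero])

lemma del_HU_one (hm : 2 ≤ m) (c : UConf 2 ↥(Lsun m)) :
    del m (HU m hm (c, 1)) = 0 := by
  rcases eq_or_lt_of_le (del_nonneg c) with hd | hd
  · rw [HU_of_del_zero hm hd.symm 1]; exact hd.symm
  · obtain ⟨x, y, hxy, hc, hxa, hya, hphix, hphiy, hPhi0, hPhi1, hdel⟩ := del_pos_struct hm hd
    have h0 : (0:ℕ) < m := by omega
    have h1 : (1:ℕ) < m := by omega
    set s : ℝ := ((1 : unitInterval):ℝ) * del m c with hs
    have hs' : s = del m c := by rw [hs]; norm_num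
    have hsx : s ≤ Complex.abs (x:ℂ) - 1 := by
      rw [hs', hdel]; exact min_le_left _ _
    have hsy : s ≤ Complex.abs (y:ℂ) - 1 := by
      rw [hs', hdel]; exact min_le_right _ _
    have hs0 : 0 ≤ s := by rw [hs']; exact del_nonneg c
    -- amt computations
    have hamtx : amt m x s = s := by
      rw [amt, max_eq_left hs0, psi_eq_of_mem_arm01 hm (by omega) hxa]
      exact min_eq_left hsx
    have hamty : amt m y s = s := by
      rw [amt, max_eq_left hs0, psi_eq_of_mem_arm01 hm (by omega) hya]
      exact min_eq_left hsy
    have habsx : Complex.abs ((mu m x s : ↥(Lsun m)) : ℂ) = Complex.abs (x:ℂ) - s := by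
      show Complex.abs (muVal m x s) = _
      rw [abs_muVal, hamtx]
      exact max_eq_right (by linarith)
    have habsy : Complex.abs ((mu m y s : ↥(Lsun m)) : ℂ) = Complex.abs (y:ℂ) - s := by
      show Complex.abs (muVal m y s) = _
      rw [abs_muVal, hamty]
      exact max_eq_right (by linarith)
    have hc' : (HU m hm (c, 1)).1 = {mu m x s, mu m y s} := by
      show (fun z => mu m z s) '' c.1 = _
      rw [hc, Set.image_pair]
    have hPhi0' : Phi m 0 (HU m hm (c, 1)) = Complex.abs (x:ℂ) - 1 - s := by
      rw [Phi, maxOver_pair hc', phi_eq_of_mem (mu_mem_arm hxa s), habsx,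
        phi_eq_zero_of_not_mem (not_mem_arm_of_mem_arm h1 h0 (by omega) (mu_mem_arm hya s))]
      rw [max_eq_left (by linarith)]
      ring
    have hPhi1' : Phi m 1 (HU m hm (c, 1)) = Complex.abs (y:ℂ) - 1 - s := by
      rw [Phi, maxOver_pair hc', phi_eq_of_mem (mu_mem_arm hya s), habsy,
        phi_eq_zero_of_not_mem (not_mem_arm_of_mem_arm h0 h1 (by omega) (mu_mem_arm hxa s))]
      rw [max_eq_right (by linarith)]
      ring
    rw [del, hPhi0', hPhi1']
    rcases le_total (Complex.abs (x:ℂ)) (Complex.abs (y:ℂ)) with hle | hle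
    · rw [min_eq_left (by linarith), hs', hdel, min_eq_left (by linarith)]; ring
    · rw [min_eq_right (by linarith), hs', hdel, min_eq_right (by linarith)]; ring

end F


-- chunk G
section G

def armPt (m j : ℕ) (hj : j < m) (r : ℝ) (h1 : 1 ≤ r) (h2 : r ≤ 2) : ↥(Lsun m) :=
  ⟨(r:ℂ) * armDir m j, arm_subset_Lsun hj (mem_arm_iff.mpr ⟨r, h1, h2, rfl⟩)⟩

lemma armPt_mem_arm {j : ℕ} (hj : j < m) (r : ℝ) (h1 : 1 ≤ r) (h2 : r ≤ 2) :
    ((armPt m j hj r h1 h2 : ↥(Lsun m)) : ℂ) ∈ Arm m j := mem_arm_iff.mpr ⟨r, h1, h2, rfl⟩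

lemma abs_armPt {j : ℕ} (hj : j < m) (r : ℝ) (h1 : 1 ≤ r) (h2 : r ≤ 2) :
    Complex.abs ((armPt m j hj r h1 h2 : ↥(Lsun m)) : ℂ) = r :=
  abs_of_mem_arm (by linarith) rfl

lemma phi_armPt_same {j : ℕ} (hj : j < m) (r : ℝ) (h1 : 1 ≤ r) (h2 : r ≤ 2) :
    phi m j (armPt m j hj r h1 h2) = r - 1 := by
  rw [phi_eq_of_mem (armPt_mem_arm hj r h1 h2), abs_armPt]

lemma phi_armPt_other {i j : ℕ} (hi : i < m) (hj : j < m) (hij : j ≠ i) (r : ℝ)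
    (h1 : 1 ≤ r) (h2 : r ≤ 2) : phi m i (armPt m j hj r h1 h2) = 0 :=
  phi_eq_zero_of_not_mem (not_mem_arm_of_mem_arm hj hi hij (armPt_mem_arm hj r h1 h2))

def r0fun (t : ℝ) : ℝ := max 1 (2 - 2*t)
def r1fun (t : ℝ) : ℝ := max 1 (2*t)

lemma r0fun_one_le (t : ℝ) : 1 ≤ r0fun t := le_max_left _ _
lemma r1fun_one_le (t : ℝ) : 1 ≤ r1fun t := le_max_left _ _
lemma r0fun_le_two {t : ℝ} (ht : 0 ≤ t) : r0fun t ≤ 2 :=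
  max_le (by norm_num) (by linarith)
lemma r1fun_le_two {t : ℝ} (ht : t ≤ 1) : r1fun t ≤ 2 :=
  max_le (by norm_num) (by linarith)

variable {m : ℕ}

def gpt0 (m : ℕ) (hm : 2 ≤ m) (t : unitInterval) : ↥(Lsun m) :=
  armPt m 0 (by omega) (r0fun t) (r0fun_one_le t) (r0fun_le_two t.2.1)

def gpt1 (m : ℕ) (hm : 2 ≤ m) (t : unitInterval) : ↥(Lsun m) :=
  armPt m 1 (by omega) (r1fun t) (r1fun_one_le t) (r1fun_le_two t.2.2)

lemma gpt_ne (hm : 2 ≤ m) (t : unitInterval) : gpt0 m hm t ≠ gpt1 m hm t := by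
  intro he
  have h0 := armPt_mem_arm (m := m) (by omega : (0:ℕ) < m) (r0fun t) (r0fun_one_le t) (r0fun_le_two t.2.1)
  have h1 := armPt_mem_arm (m := m) (by omega : (1:ℕ) < m) (r1fun t) (r1fun_one_le t) (r1fun_le_two t.2.2)
  rw [show ((armPt m 0 (by omega) (r0fun t) (r0fun_one_le t) (r0fun_le_two t.2.1) : ↥(Lsun m)) : ℂ)
    = ((gpt0 m hm t : ↥(Lsun m)) : ℂ) from rfl, he] at h0
  exact not_mem_arm_of_mem_arm (by omega) (by omega) (by omega : (1:ℕ) ≠ 0) h1 h0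

def gU (m : ℕ) (hm : 2 ≤ m) (t : unitInterval) : UConf 2 ↥(Lsun m) :=
  confProj 2 ↥(Lsun m) (mkOrd (gpt0 m hm t) (gpt1 m hm t) (gpt_ne hm t))

lemma gU_val (hm : 2 ≤ m) (t : unitInterval) : (gU m hm t).1 = {gpt0 m hm t, gpt1 m hm t} :=
  confProj_mkOrd _ _ _

lemma Phi0_gU (hm : 2 ≤ m) (t : unitInterval) : Phi m 0 (gU m hm t) = r0fun t - 1 := by
  rw [Phi, maxOver_pair (gU_val hm t)]
  show max (phi m 0 (armPt m 0 _ _ _ _)) (phi m 0 (armPt m 1 _ _ _ _)) = _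
  rw [phi_armPt_same, phi_armPt_other (by omega) (by omega) (by omega)]
  exact max_eq_left (by have := r0fun_one_le (t:ℝ); linarith)

lemma Phi1_gU (hm : 2 ≤ m) (t : unitInterval) : Phi m 1 (gU m hm t) = r1fun t - 1 := by
  rw [Phi, maxOver_pair (gU_val hm t)]
  show max (phi m 1 (armPt m 0 _ _ _ _)) (phi m 1 (armPt m 1 _ _ _ _)) = _
  rw [phi_armPt_same, phi_armPt_other (by omega) (by omega) (by omega)]
  exact max_eq_right (by have := r1fun_one_le (t:ℝ); linarith)

lemma del_gU (hm : 2 ≤ m) (t : unitInterval) : del m (gU m hm t) = 0 := by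
  rw [del, Phi0_gU hm t, Phi1_gU hm t]
  rcases le_total (t:ℝ) (1/2) with h | h
  · have h1 : r1fun t = 1 := max_eq_left (by linarith)
    rw [h1]
    have := r0fun_one_le (t:ℝ)
    rw [min_eq_right (by linarith)]
    norm_num
  · have h0 : r0fun t = 1 := max_eq_left (by linarith)
    rw [h0]
    have := r1fun_one_le (t:ℝ)
    rw [min_eq_left (by linarith)]
    norm_num

lemma gU_mem_A (hm : 2 ≤ m) (t : unitInterval) : gU m hm t ∈ Aset m :=
  (mem_Aset_iff hm).mpr (del_gU hm t)

lemma gU_mem_B (hm : 2 ≤ m) (t : unitInterval) : gU m hm t ∈ Bset m := by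
  refine ⟨⟨gpt0 m hm t, ?_, armPt_mem_arm _ _ _ _⟩, ⟨gpt1 m hm t, ?_, armPt_mem_arm _ _ _ _⟩⟩
  · rw [gU_val hm t]; exact Or.inl rfl
  · rw [gU_val hm t]; exact Or.inr rfl

lemma continuous_gU (hm : 2 ≤ m) : Continuous (gU m hm) := by
  apply (continuous_confProj 2).comp
  apply Continuous.subtype_mk
  apply continuous_pi
  intro i
  have hc0 : Continuous fun t : unitInterval => gpt0 m hm t := by
    apply Continuous.subtype_mk
    show Continuous fun t : unitInterval => ((r0fun (t:ℝ) : ℝ) : ℂ) * armDir m 0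
    apply Continuous.mul _ continuous_const
    apply Complex.continuous_ofReal.comp
    exact continuous_const.max (continuous_const.sub (continuous_const.mul continuous_subtype_val))
  have hc1 : Continuous fun t : unitInterval => gpt1 m hm t := by
    apply Continuous.subtype_mk
    show Continuous fun t : unitInterval => ((r1fun (t:ℝ) : ℝ) : ℂ) * armDir m 1
    apply Continuous.mul _ continuous_const
    apply Complex.continuous_ofReal.comp
    exact continuous_const.max (continuous_const.mul continuous_subtype_val)
  fin_cases i
  · exact hc0
  · exact hc1

def rhoVal (m : ℕ) : UConf 2 ↥(Lsun m) → ℝ :=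
  fun c => (1 - Phi m 0 c + Phi m 1 c) / 2

lemma continuous_rhoVal (hm : 2 ≤ m) : Continuous (rhoVal m) := by
  have h0 : (0:ℕ) < m := by omega
  have h1 : (1:ℕ) < m := by omega
  apply Continuous.div_const
  exact (continuous_const.sub (continuous_Phi h0)).add (continuous_Phi h1)

lemma mem_AB_struct (hm : 2 ≤ m) {c : UConf 2 ↥(Lsun m)} (hc : c ∈ Aset m ∩ Bset m) :
    ∃ (ra rb : ℝ) (h1a : 1 ≤ ra) (h2a : ra ≤ 2) (h1b : 1 ≤ rb) (h2b : rb ≤ 2),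
      c.1 = {armPt m 0 (by omega) ra h1a h2a, armPt m 1 (by omega) rb h1b h2b} ∧
      min (ra - 1) (rb - 1) = 0 ∧ Phi m 0 c = ra - 1 ∧ Phi m 1 c = rb - 1 := by
  obtain ⟨hcA, hcB⟩ := hc
  obtain ⟨⟨x, hxc, hxa⟩, ⟨y, hyc, hya⟩⟩ := hcB
  have hxy : x ≠ y := by
    intro he
    exact not_mem_arm_of_mem_arm (by omega) (by omega) (by omega : (0:ℕ) ≠ 1) hxa (he ▸ hya)
  obtain ⟨ra, h1a, h2a, hxe⟩ := mem_arm_iff.mp hxa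
  obtain ⟨rb, h1b, h2b, hye⟩ := mem_arm_iff.mp hya
  have hxp : x = armPt m 0 (by omega) ra h1a h2a := Subtype.ext hxe
  have hyp : y = armPt m 1 (by omega) rb h1b h2b := Subtype.ext hye
  have hcpair : c.1 = {x, y} := eq_pair_of_mem hxc hyc hxy
  have hPhi0 : Phi m 0 c = ra - 1 := by
    rw [Phi, maxOver_pair hcpair, hxp, hyp, phi_armPt_same,
      phi_armPt_other (by omega) (by omega) (by omega)]
    exact max_eq_left (by linarith)
  have hPhi1 : Phi m 1 c = rb - 1 := by
    rw [Phi, maxOver_pair hcpair, hxp, hyp, phi_armPt_same,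
      phi_armPt_other (by omega) (by omega) (by omega)]
    exact max_eq_right (by linarith)
  have hdel : del m c = 0 := (mem_Aset_iff hm).mp hcA
  rw [del, hPhi0, hPhi1] at hdel
  exact ⟨ra, rb, h1a, h2a, h1b, h2b, by rw [hcpair, hxp, hyp], hdel, hPhi0, hPhi1⟩

lemma rhoVal_mem (hm : 2 ≤ m) {c : UConf 2 ↥(Lsun m)} (hc : c ∈ Aset m ∩ Bset m) :
    rhoVal m c ∈ unitInterval := by
  obtain ⟨ra, rb, h1a, h2a, h1b, h2b, _, hmin, hPhi0, hPhi1⟩ := mem_AB_struct hm hc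
  rw [rhoVal, hPhi0, hPhi1]
  constructor <;> [skip; skip] <;>
  · rcases le_total (ra - 1) (rb - 1) with h | h
    · rw [min_eq_left h] at hmin
      first
        | (show (0:ℝ) ≤ _; nlinarith)
        | (show _ ≤ (1:ℝ); nlinarith)
    · rw [min_eq_right h] at hmin
      first
        | (show (0:ℝ) ≤ _; nlinarith)
        | (show _ ≤ (1:ℝ); nlinarith)

lemma rho_gU (hm : 2 ≤ m) (t : unitInterval) : rhoVal m (gU m hm t) = (t : ℝ) := by
  rw [rhoVal, Phi0_gU hm t, Phi1_gU hm t]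
  rcases le_total (t:ℝ) (1/2) with h | h
  · rw [show r1fun (t:ℝ) = 1 from max_eq_left (by linarith),
      show r0fun (t:ℝ) = 2 - 2*(t:ℝ) from max_eq_right (by linarith)]
    ring
  · rw [show r0fun (t:ℝ) = 1 from max_eq_left (by linarith),
      show r1fun (t:ℝ) = 2*(t:ℝ) from max_eq_right (by linarith)]
    ring

lemma gU_rho (hm : 2 ≤ m) {c : UConf 2 ↥(Lsun m)} (hc : c ∈ Aset m ∩ Bset m) :
    gU m hm ⟨rhoVal m c, rhoVal_mem hm hc⟩ = c := by
  obtain ⟨ra, rb, h1a, h2a, h1b, h2b, hcpair, hmin, hPhi0, hPhi1⟩ := mem_AB_struct hm hc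
  have hval : rhoVal m c = (1 - (ra - 1) + (rb - 1)) / 2 := by rw [rhoVal, hPhi0, hPhi1]
  have hcase : ra = 1 ∨ rb = 1 := by
    rcases le_total (ra - 1) (rb - 1) with h | h
    · left; rw [min_eq_left h] at hmin; linarith
    · right; rw [min_eq_right h] at hmin; linarith
  have hr0 : r0fun (rhoVal m c) = ra := by
    rw [hval, r0fun]
    rcases hcase with h | h
    · subst h
      apply max_eq_left
      linarith
    · subst h
      rw [show (2:ℝ) - 2 * ((1 - (ra - 1) + (1 - 1)) / 2) = ra from by ring]
      exact max_eq_right h1a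
  have hr1 : r1fun (rhoVal m c) = rb := by
    rw [hval, r1fun]
    rcases hcase with h | h
    · subst h
      rw [show (2:ℝ) * ((1 - (1 - 1) + (rb - 1)) / 2) = rb from by ring]
      exact max_eq_right h1b
    · subst h
      apply max_eq_left
      linarith
  apply UConf.ext
  rw [gU_val hm _, hcpair]
  congr 1
  · apply Subtype.ext
    show ((r0fun (rhoVal m c) : ℝ) : ℂ) * armDir m 0 = ((ra : ℝ) : ℂ) * armDir m 0
    rw [hr0]
  · apply congrArg
    apply Subtype.ext
    show ((r1fun (rhoVal m c) : ℝ) : ℂ) * armDir m 1 = ((rb : ℝ) : ℂ) * armDir m 1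
    rw [hr1]

/-- the homeomorphism `[0,1] ≃ A ∩ B` -/
def homeoAB (m : ℕ) (hm : 2 ≤ m) : unitInterval ≃ₜ ↥(Aset m ∩ Bset m) where
  toFun t := ⟨gU m hm t, gU_mem_A hm t, gU_mem_B hm t⟩
  invFun c := ⟨rhoVal m c.1, rhoVal_mem hm c.2⟩
  left_inv t := by
    apply Subtype.ext
    show rhoVal m (gU m hm t) = (t : ℝ)
    exact rho_gU hm t
  right_inv c := by
    apply Subtype.ext
    show gU m hm ⟨rhoVal m c.1, rhoVal_mem hm c.2⟩ = c.1
    exact gU_rho hm c.2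
  continuous_toFun := (continuous_gU hm).subtype_mk _
  continuous_invFun := ((continuous_rhoVal hm).comp continuous_subtype_val).subtype_mk _

end G


-- chunk H : homotopy equivalence with A and the fundamental group isomorphism
section H

def inclA (m : ℕ) : C(↥(Aset m), UConf 2 ↥(Lsun m)) :=
  ⟨Subtype.val, continuous_subtype_val⟩

def retrA (m : ℕ) (hm : 2 ≤ m) : C(UConf 2 ↥(Lsun m), ↥(Aset m)) :=
  ⟨fun c => ⟨HU m hm (c, 1), (mem_Aset_iff hm).mpr (del_HU_one hm c)⟩, by
    apply Continuous.subtype_mk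
    exact (continuous_HU hm).comp (continuous_id.prodMk continuous_const)⟩

def bigHomotopy (m : ℕ) (hm : 2 ≤ m) :
    ContinuousMap.Homotopy (ContinuousMap.id (UConf 2 ↥(Lsun m)))
      ((inclA m).comp (retrA m hm)) where
  toFun := fun p => HU m hm (p.2, p.1)
  continuous_toFun := (continuous_HU hm).comp (continuous_snd.prodMk continuous_fst)
  map_zero_left := fun c => HU_zero hm c
  map_one_left := fun c => rfl

def hEquiv (m : ℕ) (hm : 2 ≤ m) :
    ContinuousMap.HomotopyEquiv (UConf 2 ↥(Lsun m)) ↥(Aset m) where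
  toFun := retrA m hm
  invFun := inclA m
  left_inv := ⟨(bigHomotopy m hm).symm⟩
  right_inv := by
    have h : (retrA m hm).comp (inclA m) = ContinuousMap.id ↥(Aset m) := by
      ext a
      show HU m hm ((a:UConf 2 ↥(Lsun m)), 1) = (a : UConf 2 ↥(Lsun m))
      exact HU_of_del_zero hm ((mem_Aset_iff hm).mp a.2) 1
    rw [h]

open scoped FundamentalGroupoid in
def pi1Equiv (m : ℕ) (hm : 2 ≤ m) (c₀ : UConf 2 ↥(Lsun m)) (hc₀A : c₀ ∈ Aset m) :
    FundamentalGroup (UConf 2 ↥(Lsun m)) c₀ ≃* FundamentalGroup ↥(Aset m) ⟨c₀, hc₀A⟩ := by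
  let e := FundamentalGroupoidFunctor.equivOfHomotopyEquiv
    (X := TopCat.of (UConf 2 ↥(Lsun m))) (Y := TopCat.of ↥(Aset m)) (hEquiv m hm)
  let g1 := e.fullyFaithfulFunctor.mulEquivEnd
    (⟨c₀⟩ : FundamentalGroupoid (UConf 2 ↥(Lsun m)))
  have hobj : e.functor.obj ⟨c₀⟩ = (⟨(⟨c₀, hc₀A⟩ : ↥(Aset m))⟩ :
      FundamentalGroupoid ↥(Aset m)) := by
    show (⟨(retrA m hm) c₀⟩ : FundamentalGroupoid ↥(Aset m)) = _
    have : (retrA m hm) c₀ = (⟨c₀, hc₀A⟩ : ↥(Aset m)) := by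
      apply Subtype.ext
      show HU m hm (c₀, 1) = c₀
      exact HU_of_del_zero hm ((mem_Aset_iff hm).mp hc₀A) 1
    rw [this]
  exact @MulEquiv.trans _ _ _ _ _ _ g1 (eqToIso hobj).conj

end H


/-- with `A = U₂(L^{-0}) ∪ U₂(L^{-1})` and
`B = {c : c meets both A₀ and A₁}`, one has `A ∪ B = U₂(Lₙ)`, `A ∩ B ≃ [0,1]`, and
`π₁(U₂(Lₙ), c₀) ≅ π₁(A, c₀)` for the base configuration `c₀ = {1, ζ}`, `ζ = e^{2πi/n}`. -/
theorem conf_cover_and_pi1_of_A (n : ℕ) (hn : 2 ≤ n)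
    (A B : Set (UConf 2 ↥(Lsun n)))
    (hA : A = {c | (∀ z : ↥(Lsun n), z ∈ c.1 → (z : ℂ) ∈ LminusArm n 0) ∨
      ∀ z : ↥(Lsun n), z ∈ c.1 → (z : ℂ) ∈ LminusArm n 1})
    (hB : B = {c | (∃ z : ↥(Lsun n), z ∈ c.1 ∧ (z : ℂ) ∈ Arm n 0) ∧ ∃ z : ↥(Lsun n), z ∈ c.1 ∧ (z : ℂ) ∈ Arm n 1})
    (c₀ : UConf 2 ↥(Lsun n))
    (hc₀ : Subtype.val '' c₀.1 = {1, Complex.exp (2 * Real.pi / n * Complex.I)})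
    (hc₀A : c₀ ∈ A) :
    A ∪ B = Set.univ ∧ Nonempty (↥(A ∩ B) ≃ₜ unitInterval) ∧
      Nonempty (FundamentalGroup (UConf 2 ↥(Lsun n)) c₀ ≃*
        FundamentalGroup ↥A ⟨c₀, hc₀A⟩) := by
  have hA' : A = Aset n := hA
  have hB' : B = Bset n := hB
  subst hA'
  subst hB'
  refine ⟨?_, ⟨(homeoAB n hn).symm⟩, ⟨pi1Equiv n hn c₀ hc₀A⟩⟩
  ext c
  simp only [Set.mem_union, Set.mem_univ, iff_true]
  by_cases hc : c ∈ Bset n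
  · exact Or.inr hc
  · left
    simp only [Bset, Set.mem_setOf_eq, not_and_or] at hc
    show _ ∨ _
    rcases hc with hc | hc
    · push_neg at hc
      exact Or.inl fun z hz => subset_closure ⟨z.2, hc z hz⟩
    · push_neg at hc
      exact Or.inr fun z hz => subset_closure ⟨z.2, hc z hz⟩

end
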